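/- Along the compressive branch, the Lax parameter α₄(ρ) = (u(ρ) + c(ρ)) − (u_r + c_r) is strictly increasing in ρ on (ρ_r, η ρ_r); that is, dα₄/dρ = du/dρ + dc/dρ > 0 for every ρ ∈ (ρ_r, η ρ_r). -/

import Mathlib

/-- The Lax parameter `α₄(ρ) = (u(ρ) + c(ρ)) − (u_r + c_r)` is strictly increasing
on the compressive branch, with `α₄' = u' + c' > 0`. -/
theorem stmt4 (γ ρr ur pr η cr : ℝ)
    (hγ : 1 < γ) (hρr : 0 < ρr) (hpr : 0 < pr)
    (hη : η = (γ + 1) / (γ - 1))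
    (hcr : cr = Real.sqrt (γ * pr / ρr))
    (p u c α : ℝ → ℝ)
    (hp : ∀ ρ, p ρ = pr * (η * ρ - ρr) / (η * ρr - ρ))
    (hu : ∀ ρ, u ρ = ur + cr * Real.sqrt (2 / (γ - 1)) * (ρ - ρr)
        / Real.sqrt ((η * ρr - ρ) * ρ))
    (hc : ∀ ρ, c ρ = Real.sqrt (γ * p ρ / ρ))
    (hα : ∀ ρ, α ρ = (u ρ + c ρ) - (ur + cr)) :
    StrictMonoOn α (Set.Ioo ρr (η * ρr))
    ∧ ∀ ρ ∈ Set.Ioo ρr (η * ρr),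
        deriv α ρ = deriv u ρ + deriv c ρ ∧ 0 < deriv α ρ := by
  have hγ1 : (0:ℝ) < γ - 1 := by linarith
  have hηgt : 1 < η := by
    rw [hη, lt_div_iff₀ hγ1]; linarith
  have hcrpos : 0 < cr := by
    rw [hcr]; exact Real.sqrt_pos.mpr (by positivity)
  have hspos : 0 < Real.sqrt (2 / (γ - 1)) := Real.sqrt_pos.mpr (by positivity)
  have hApos : 0 < cr * Real.sqrt (2 / (γ - 1)) := mul_pos hcrpos hspos
  have hufun : u = fun x => ur + cr * Real.sqrt (2 / (γ - 1)) * (x - ρr)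
      / Real.sqrt ((η * ρr - x) * x) := funext hu
  have hcfun : c = fun x => Real.sqrt (γ * (pr * (η * x - ρr) / (η * ρr - x)) / x) :=
    funext fun x => by rw [hc, hp]
  have hαfun : α = fun x => (u x + c x) - (ur + cr) := funext hα
  set A := cr * Real.sqrt (2 / (γ - 1)) with hAdef
  have key : ∀ ρ ∈ Set.Ioo ρr (η * ρr), ∃ du dc,
      HasDerivAt u du ρ ∧ HasDerivAt c dc ρ ∧ 0 < du ∧ 0 < dc := by
    rintro ρ ⟨h1, h2⟩
    have hρpos : 0 < ρ := hρr.trans h1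
    have hd1 : 0 < η * ρr - ρ := by linarith
    have hw : 0 < (η * ρr - ρ) * ρ := mul_pos hd1 hρpos
    set t := Real.sqrt ((η * ρr - ρ) * ρ) with hts
    have htpos : 0 < t := Real.sqrt_pos.mpr hw
    have ht2 : t * t = (η * ρr - ρ) * ρ := Real.mul_self_sqrt hw.le
    -- u part
    have hwD : HasDerivAt (fun x => (η * ρr - x) * x) (η * ρr - 2 * ρ) ρ := by
      have h := ((hasDerivAt_id ρ).const_sub (η * ρr)).mul (hasDerivAt_id ρ)
      refine h.congr_deriv ?_
      simp only [id]; ring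
    have hsqD : HasDerivAt (fun x => Real.sqrt ((η * ρr - x) * x))
        ((η * ρr - 2 * ρ) / (2 * t)) ρ := hwD.sqrt hw.ne'
    have hnD : HasDerivAt (fun x => A * (x - ρr)) (A * 1) ρ :=
      ((hasDerivAt_id ρ).sub_const ρr).const_mul A
    have hqD := hnD.div hsqD htpos.ne'
    have huD : HasDerivAt u
        ((A * 1 * t - A * (ρ - ρr) * ((η * ρr - 2 * ρ) / (2 * t))) / t ^ 2) ρ := by
      rw [hufun]
      exact hqD.const_add ur
    set du := (A * 1 * t - A * (ρ - ρr) * ((η * ρr - 2 * ρ) / (2 * t))) / t ^ 2 with hdu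
    have hdupos : 0 < du := by
      have heq : du = A * (ρr * (η * ρ + η * ρr - 2 * ρ)) / (2 * t ^ 3) := by
        rw [hdu]
        field_simp
        linear_combination 2 * ht2
      rw [heq]
      have hnum : 0 < η * ρ + η * ρr - 2 * ρ := by nlinarith
      positivity
    -- c part
    have hn1 : 0 < η * ρ - ρr := by nlinarith
    have hppos : 0 < γ * (pr * (η * ρ - ρr) / (η * ρr - ρ)) / ρ := by positivity
    have hnum1 : HasDerivAt (fun x => pr * (η * x - ρr)) (pr * (η * 1)) ρ :=
      (((hasDerivAt_id ρ).const_mul η).sub_const ρr).const_mul pr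
    have hden1 : HasDerivAt (fun x => η * ρr - x) (-1) ρ :=
      (hasDerivAt_id ρ).const_sub (η * ρr)
    have hpD := hnum1.div hden1 hd1.ne'
    have hgD := hpD.const_mul γ
    have hhD := hgD.div (hasDerivAt_id ρ) hρpos.ne'
    simp only [id_eq] at hhD
    have hcD := hhD.sqrt hppos.ne'
    simp only [Pi.div_apply, id] at hcD
    rw [← hcfun] at hcD
    refine ⟨du, _, huD, hcD, hdupos, ?_⟩
    have hhpos : 0 < γ * ((pr * (η * 1) * (η * ρr - ρ) - pr * (η * ρ - ρr) * (-1)) /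
        (η * ρr - ρ) ^ 2) * ρ - γ * (pr * (η * ρ - ρr) / (η * ρr - ρ)) * 1 := by
      have heq : γ * ((pr * (η * 1) * (η * ρr - ρ) - pr * (η * ρ - ρr) * (-1)) /
          (η * ρr - ρ) ^ 2) * ρ - γ * (pr * (η * ρ - ρr) / (η * ρr - ρ)) * 1
          = γ * pr * (η * ρ ^ 2 + η * ρr ^ 2 - 2 * ρ * ρr) / (η * ρr - ρ) ^ 2 := by
        field_simp
        ring
      rw [heq]
      have : 0 < η * ρ ^ 2 + η * ρr ^ 2 - 2 * ρ * ρr := by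
        nlinarith [sq_nonneg (ρ - ρr), mul_pos hρpos hρr]
      positivity
    have hhpos' : 0 < (γ * ((pr * (η * 1) * (η * ρr - ρ) - pr * (η * ρ - ρr) * (-1)) /
        (η * ρr - ρ) ^ 2) * ρ - γ * (pr * (η * ρ - ρr) / (η * ρr - ρ)) * 1) / ρ ^ 2 :=
      div_pos hhpos (by positivity)
    exact div_pos hhpos' (by positivity)
  constructor
  · apply strictMonoOn_of_deriv_pos (convex_Ioo _ _)
    · intro x hx
      obtain ⟨du, dc, hdu, hdc, _, _⟩ := key x hx
      have : HasDerivAt α (du + dc) x := by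
        rw [hαfun]; exact (hdu.add hdc).sub_const _
      exact this.continuousAt.continuousWithinAt
    · intro x hx
      rw [interior_Ioo] at hx
      obtain ⟨du, dc, hdu, hdc, hp1, hp2⟩ := key x hx
      have hαD : HasDerivAt α (du + dc) x := by
        rw [hαfun]; exact (hdu.add hdc).sub_const _
      rw [hαD.deriv]; linarith
  · intro ρ hρ
    obtain ⟨du, dc, hdu, hdc, hp1, hp2⟩ := key ρ hρ
    have hαD : HasDerivAt α (du + dc) ρ := by
      rw [hαfun]; exact (hdu.add hdc).sub_const _
    rw [hαD.deriv, hdu.deriv, hdc.deriv]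
    exact ⟨rfl, by linarith⟩
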